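/- arXiv:2006.08910 — 3 statements merged into one kernel-verified Lean document; each statement's English description precedes it below -/
import Mathlib

section
/- There exists a finite-horizon MDP with horizon 2 and three policies π₀, π₁, π₂ such that, under noiseless trajectory comparisons (a trajectory τ is preferred to τ' if and only if its total reward is strictly larger), the preference probabilities satisfy φ(π₀,π₁) < 0, φ(π₁,π₂) < 0, and φ(π₂,π₀) < 0, i.e., policy preferences are non-transitive. Concretely: from start state s₀ with reward 0, action a₀ leads with probability 0.2 to a state of reward 1 and with probability 0.8 to a state of reward 0.01; action a₁ leads with probability 1 to a state of reward 0.02; action a₂ leads with probability 0.6 to a state of reward 0.5 and with probability 0.4 to a state of reward 0. With πᵢ(s₀)=aᵢ, one has φ(π₀,π₁) = -0.3, φ(π₁,π₂) = -0.1, φ(π₂,π₀) = -0.02, where φ(π,π') = Pr[trajectory of π beats trajectory of π'] - 1/2. -/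
open Finset

/-- Win probability of distribution `p` over distribution `q` under noiseless
comparisons: a trajectory beats another iff its total reward is strictly larger.
Each distribution is given by finitely many (probability, total reward) outcomes. -/
noncomputable def winProb {n m : ℕ} (p : Fin n → ℝ × ℝ) (q : Fin m → ℝ × ℝ) : ℝ :=
  ∑ i, ∑ j, (p i).1 * (q j).1 * (if (q j).2 < (p i).2 then (1 : ℝ) else 0)

/-- Preference φ(p,q) = Pr[p's trajectory beats q's trajectory] - 1/2. -/
noncomputable def pref {n m : ℕ} (p : Fin n → ℝ × ℝ) (q : Fin m → ℝ × ℝ) : ℝ :=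
  winProb p q - 1/2

/-- Proposition 1: there is a horizon-2 MDP (encoded by the trajectory-reward
distributions of three policies from the start state) such that, under noiseless
trajectory comparisons, the policy preferences are non-transitive:
φ(π₀,π₁) = -0.3 < 0, φ(π₁,π₂) = -0.1 < 0, φ(π₂,π₀) = -0.02 < 0.
Concretely π₀ yields reward 1 w.p. 0.2 and 0.01 w.p. 0.8, π₁ yields 0.02 surely,
π₂ yields 0.5 w.p. 0.6 and 0 w.p. 0.4. -/
theorem nontransitive_preferences :
    ∃ p₀ p₁ p₂ : Fin 2 → ℝ × ℝ,
      (∀ i, 0 ≤ (p₀ i).1) ∧ (∀ i, 0 ≤ (p₁ i).1) ∧ (∀ i, 0 ≤ (p₂ i).1) ∧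
      (∑ i, (p₀ i).1 = 1) ∧ (∑ i, (p₁ i).1 = 1) ∧ (∑ i, (p₂ i).1 = 1) ∧
      p₀ = ![(0.2, 1), (0.8, 0.01)] ∧
      p₁ = ![(1, 0.02), (0, 0)] ∧
      p₂ = ![(0.6, 0.5), (0.4, 0)] ∧
      pref p₀ p₁ = -0.3 ∧ pref p₁ p₂ = -0.1 ∧ pref p₂ p₀ = -0.02 ∧
      pref p₀ p₁ < 0 ∧ pref p₁ p₂ < 0 ∧ pref p₂ p₀ < 0 := by
  refine ⟨![(0.2, 1), (0.8, 0.01)], ![(1, 0.02), (0, 0)], ![(0.6, 0.5), (0.4, 0)],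
    ?_, ?_, ?_, ?_, ?_, ?_, rfl, rfl, rfl, ?_, ?_, ?_, ?_, ?_, ?_⟩ <;>
  simp [pref, winProb, Fin.sum_univ_two, Fin.forall_fin_two] <;> norm_num
end

section
/- Let π̂ be a non-stationary policy and let S̃ = {s ∈ S : μ(s) ≥ ε/(2S)} where μ(s) is the maximum probability of reaching s over all policies and S = |S|. Suppose for every step h and every s ∈ S̃ ∩ S_h, v_h^{ã*∘π̂_{h+1:H}}(s) - v_h^{π̂_{h:H}}(s) ≤ ε/(2H). Then v^{π*}(s₀) - v^{π̂}(s₀) ≤ ε. -/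
open Finset

/-- Value of a non-stationary policy `π` with `n` remaining steps, at current step `h`
and state `s`. -/
noncomputable def val {S A : Type*} [Fintype S] (p : S → A → S → ℝ) (r : S → A → ℝ)
    (π : ℕ → S → A) : ℕ → ℕ → S → ℝ
  | 0, _, _ => 0
  | n + 1, h, s => r s (π h s) + ∑ s' : S, p s (π h s) s' * val p r π n (h + 1) s'

/-- State distribution at step `h` induced by policy `π` from start state `s₀`. -/
noncomputable def stDist {S A : Type*} [Fintype S] [DecidableEq S]
    (p : S → A → S → ℝ) (π : ℕ → S → A) (s₀ : S) : ℕ → S → ℝ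
  | 0, s => if s = s₀ then 1 else 0
  | h + 1, s' => ∑ s : S, stDist p π s₀ h s * p s (π h s) s'

/-- The policy `a ∘ π_{h+1:H}`: take action `a` at step `h`, then follow `π`. -/
def actHyb {S A : Type*} (a : A) (π : ℕ → S → A) (h : ℕ) : ℕ → S → A :=
  fun t s => if t = h then a else π t s

lemma stDist_nonneg' {S A : Type*} [Fintype S] [DecidableEq S]
    (p : S → A → S → ℝ) (π : ℕ → S → A) (s₀ : S)
    (hp0 : ∀ s a s', 0 ≤ p s a s') :
    ∀ h s, 0 ≤ stDist p π s₀ h s := by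
  intro h
  induction h with
  | zero => intro s; simp only [stDist]; split <;> norm_num
  | succ h ih =>
    intro s
    exact Finset.sum_nonneg fun s' _ => mul_nonneg (ih s') (hp0 _ _ _)

lemma stDist_sum' {S A : Type*} [Fintype S] [DecidableEq S]
    (p : S → A → S → ℝ) (π : ℕ → S → A) (s₀ : S)
    (hp1 : ∀ s a, ∑ s' : S, p s a s' = 1) :
    ∀ h, ∑ s : S, stDist p π s₀ h s = 1 := by
  intro h
  induction h with
  | zero => simp [stDist]
  | succ h ih =>
    show ∑ s' : S, ∑ s : S, stDist p π s₀ h s * p s (π h s) s' = 1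
    rw [Finset.sum_comm]
    simp [← Finset.mul_sum, hp1, ih]

lemma val_actHyb' {S A : Type*} [Fintype S]
    (p : S → A → S → ℝ) (r : S → A → ℝ) (π : ℕ → S → A) (a : A) (h : ℕ) :
    ∀ n t, h < t → ∀ s, val p r (actHyb a π h) n t s = val p r π n t s := by
  intro n
  induction n with
  | zero => intro t ht s; rfl
  | succ n ih =>
    intro t ht s
    have hne : actHyb a π h t = π t := by
      funext s'; exact if_neg (Nat.ne_of_gt ht)
    simp only [_root_.val, hne]
    congr 1
    exact Finset.sum_congr rfl fun s' _ => by rw [ih (t+1) (by omega)]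

/-- Suboptimality bound up to hard-to-reach states.  Layered MDP with `|S| = card S`
states, values in [0,1]; `μ s` dominates the reach probability of `s` under every
policy, and each state is only reachable at its own layer `ℓ s`.  Let
S̃ = {s : μ(s) ≥ ε/(2S)}.  If at every step h < H and every good state s ∈ S̃ the
policy π̂ satisfies v_h^{a∘π̂_{h+1:H}}(s) - v_h^{π̂_{h:H}}(s) ≤ ε/(2H) for every
action a (in particular the argmax one), then v^{π*}(s₀) - v^{π̂}(s₀) ≤ ε. -/
theorem eps_optimal_up_to_rare_states {S A : Type*} [Fintype S] [DecidableEq S]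
    (p : S → A → S → ℝ) (r : S → A → ℝ)
    (hp0 : ∀ s a s', 0 ≤ p s a s') (hp1 : ∀ s a, ∑ s' : S, p s a s' = 1)
    (H : ℕ) (hH : 0 < H) (s₀ : S) (ε : ℝ) (hε : 0 < ε)
    (μ : S → ℝ) (ℓ : S → ℕ)
    (hμ : ∀ (π : ℕ → S → A) (h : ℕ) (s : S), stDist p π s₀ h s ≤ μ s)
    (hlayer : ∀ (π : ℕ → S → A) (h : ℕ) (s : S), ℓ s ≠ h → stDist p π s₀ h s = 0)
    (hvb : ∀ (π : ℕ → S → A) (h : ℕ) (s : S), h < H →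
      val p r π (H - h) h s ∈ Set.Icc (0 : ℝ) 1)
    (πhat : ℕ → S → A)
    (hgood : ∀ h < H, ∀ s : S, ε / (2 * (Fintype.card S)) ≤ μ s → ∀ a : A,
      val p r (actHyb a πhat h) (H - h) h s - val p r πhat (H - h) h s ≤ ε / (2 * H)) :
    ∀ πstar : ℕ → S → A, val p r πstar H 0 s₀ - val p r πhat H 0 s₀ ≤ ε := by
  intro πstar
  classical
  set d : ℕ → S → ℝ := stDist p πstar s₀ with hd
  have hd0 : ∀ h s, 0 ≤ d h s := stDist_nonneg' p πstar s₀ hp0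
  have hdsum : ∀ h, ∑ s : S, d h s = 1 := stDist_sum' p πstar s₀ hp1
  have hcard : (0 : ℝ) < (Fintype.card S : ℝ) := by
    have : 0 < Fintype.card S := Fintype.card_pos_iff.mpr ⟨s₀⟩
    exact_mod_cast this
  have hμ0 : ∀ s, 0 ≤ μ s := fun s => le_trans (hd0 0 s) (hμ πstar 0 s)
  set T : ℕ → ℝ := fun h =>
    ∑ s : S, d h s * (val p r πstar (H - h) h s - val p r πhat (H - h) h s) with hT
  have hkey : ∀ h ∈ Finset.range H, T h - T (h + 1)
      = ∑ s : S, d h s *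
        (val p r (actHyb (πstar h s) πhat h) (H - h) h s - val p r πhat (H - h) h s) := by
    intro h hh
    rw [Finset.mem_range] at hh
    obtain ⟨n, hn⟩ : ∃ n, H - h = n + 1 := ⟨H - (h + 1), by omega⟩
    have hn' : H - (h + 1) = n := by omega
    have hAct : ∀ s : S, val p r (actHyb (πstar h s) πhat h) (n + 1) h s
        = r s (πstar h s) + ∑ s' : S, p s (πstar h s) s' * val p r πhat n (h + 1) s' := by
      intro s
      simp only [_root_.val]
      rw [show actHyb (πstar h s) πhat h h s = πstar h s from if_pos rfl]
      congr 1
      exact Finset.sum_congr rfl fun s' _ => by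
        rw [val_actHyb' p r πhat (πstar h s) h n (h + 1) (by omega)]
    have hdstep : ∀ s' : S, d (h + 1) s' = ∑ s : S, d h s * p s (πstar h s) s' := by
      intro s'; rfl
    simp only [hT, hn, hn']
    simp only [hAct]
    have hB : ∑ s' : S, (∑ s : S, d h s * p s (πstar h s) s') *
        (val p r πstar n (h + 1) s' - val p r πhat n (h + 1) s')
        = ∑ s : S, d h s * ∑ s' : S, p s (πstar h s) s' *
          (val p r πstar n (h + 1) s' - val p r πhat n (h + 1) s') := by
      simp only [Finset.sum_mul, Finset.mul_sum]
      rw [Finset.sum_comm]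
      exact Finset.sum_congr rfl fun s _ => Finset.sum_congr rfl fun s' _ => by ring
    simp only [hdstep]
    rw [hB, ← Finset.sum_sub_distrib]
    refine Finset.sum_congr rfl fun s _ => ?_
    rw [← mul_sub]
    congr 1
    simp only [_root_.val, mul_sub, Finset.sum_sub_distrib]
    ring
  have tel : ∑ h ∈ Finset.range H, (T h - T (h + 1)) = T 0 - T H :=
    Finset.sum_range_sub' T H
  have hTH : T H = 0 := by
    simp [hT, Nat.sub_self, _root_.val]
  have hT0 : T 0 = val p r πstar H 0 s₀ - val p r πhat H 0 s₀ := by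
    have : ∀ s : S, d 0 s = if s = s₀ then 1 else 0 := fun s => rfl
    simp only [hT, this, Nat.sub_zero, ite_mul, one_mul, zero_mul]
    rw [Finset.sum_ite_eq' Finset.univ s₀]
    simp
  have hsum_layer : ∀ s : S, ∑ h ∈ Finset.range H, d h s ≤ μ s := by
    intro s
    have heq : ∑ h ∈ Finset.range H, d h s
        = ∑ h ∈ Finset.range H, if ℓ s = h then d h s else 0 := by
      refine Finset.sum_congr rfl fun h _ => ?_
      split
      · rfl
      · exact hlayer πstar h s ‹_›
    rw [heq, Finset.sum_ite_eq]
    split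
    · exact hμ πstar (ℓ s) s
    · exact hμ0 s
  -- main bound
  have hmain : val p r πstar H 0 s₀ - val p r πhat H 0 s₀
      = ∑ h ∈ Finset.range H, ∑ s : S, d h s *
        (val p r (actHyb (πstar h s) πhat h) (H - h) h s - val p r πhat (H - h) h s) := by
    rw [← Finset.sum_congr rfl hkey, tel, hTH, sub_zero, hT0]
  rw [hmain]
  have hbound : ∀ h ∈ Finset.range H, ∀ s : S,
      d h s * (val p r (actHyb (πstar h s) πhat h) (H - h) h s - val p r πhat (H - h) h s)
      ≤ d h s * (ε / (2 * H)) + (if μ s < ε / (2 * (Fintype.card S)) then d h s else 0) := by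
    intro h hh s
    rw [Finset.mem_range] at hh
    by_cases hs : ε / (2 * (Fintype.card S)) ≤ μ s
    · rw [if_neg (not_lt.mpr hs), add_zero]
      exact mul_le_mul_of_nonneg_left (hgood h hh s hs (πstar h s)) (hd0 h s)
    · rw [if_pos (lt_of_not_ge hs)]
      have h1 : val p r (actHyb (πstar h s) πhat h) (H - h) h s
          - val p r πhat (H - h) h s ≤ 1 := by
        have := (hvb (actHyb (πstar h s) πhat h) h s hh).2
        have := (hvb πhat h s hh).1
        linarith
      have h2 : d h s * (val p r (actHyb (πstar h s) πhat h) (H - h) h s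
          - val p r πhat (H - h) h s) ≤ d h s * 1 :=
        mul_le_mul_of_nonneg_left h1 (hd0 h s)
      have h3 : 0 ≤ d h s * (ε / (2 * H)) := by
        apply mul_nonneg (hd0 h s)
        positivity
      linarith
  calc ∑ h ∈ Finset.range H, ∑ s : S, d h s *
        (val p r (actHyb (πstar h s) πhat h) (H - h) h s - val p r πhat (H - h) h s)
      ≤ ∑ h ∈ Finset.range H, ∑ s : S,
        (d h s * (ε / (2 * H)) + (if μ s < ε / (2 * (Fintype.card S)) then d h s else 0)) := by
        refine Finset.sum_le_sum fun h hh => Finset.sum_le_sum fun s _ => hbound h hh s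
    _ = ∑ h ∈ Finset.range H, (ε / (2 * H)
        + ∑ s : S, (if μ s < ε / (2 * (Fintype.card S)) then d h s else 0)) := by
        refine Finset.sum_congr rfl fun h _ => ?_
        rw [Finset.sum_add_distrib, ← Finset.sum_mul, hdsum h, one_mul]
    _ = H * (ε / (2 * H)) + ∑ h ∈ Finset.range H, ∑ s : S,
        (if μ s < ε / (2 * (Fintype.card S)) then d h s else 0) := by
        rw [Finset.sum_add_distrib, Finset.sum_const, Finset.card_range, nsmul_eq_mul]
    _ ≤ ε / 2 + ε / 2 := by
        have hHne : (H : ℝ) ≠ 0 := by positivity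
        have e1 : (H : ℝ) * (ε / (2 * H)) = ε / 2 := by field_simp
        rw [e1]
        gcongr
        rw [Finset.sum_comm]
        have : ∀ s : S, ∑ h ∈ Finset.range H,
            (if μ s < ε / (2 * (Fintype.card S)) then d h s else 0)
            ≤ ε / (2 * (Fintype.card S)) := by
          intro s
          by_cases hb : μ s < ε / (2 * (Fintype.card S))
          · simp only [if_pos hb]
            exact le_trans (hsum_layer s) (le_of_lt hb)
          · simp only [if_neg hb, Finset.sum_const, smul_zero]
            positivity
        calc ∑ s : S, ∑ h ∈ Finset.range H,
            (if μ s < ε / (2 * (Fintype.card S)) then d h s else 0)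
            ≤ ∑ s : S, ε / (2 * (Fintype.card S)) := Finset.sum_le_sum fun s _ => this s
          _ = ε / 2 := by
              rw [Finset.sum_const, nsmul_eq_mul]
              field_simp
              rw [Finset.card_univ]
    _ = ε := by ring
end

section
/- Let μ, C, L, A, H > 0 and suppose the regret inequality μN₀ - N ≤ C(√(μ S A H N₀ L) + √S · S A H² L³ (√S + √H)) holds. If additionally μ ≥ ε/(2S) and N₀ ≥ c₀ S³ A H² L³ / ε for a sufficiently large constant c₀ (depending only on C), then N ≥ μN₀/2. That is, a sublinear regret bound for the synthetic reward forces visiting the target state at least half as often as the best possible rate. -/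
/-- Algebraic consequence of the EULER regret bound: for every constant C > 0 there is a
constant c₀ > 0 (depending only on C) such that, whenever 1 ≤ A, L, 1 ≤ H ≤ S, 0 < ε,
0 < μ ≤ 1, 0 ≤ N, the regret inequality
μ·N₀ - N ≤ C(√(μ·S·A·H·N₀·L) + √S·S·A·H²·L³·(√S + √H)) holds, μ ≥ ε/(2S), and
N₀ ≥ c₀·S³·A·H²·L³/ε, then N ≥ μ·N₀/2: sublinear regret for the synthetic reward
forces visiting the target state at least half as often as the best possible rate. -/
theorem euler_regret_forces_visits (C : ℝ) (hC : 0 < C) :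
    ∃ c₀ : ℝ, 0 < c₀ ∧
      ∀ μ S A H L ε N₀ N : ℝ,
        1 ≤ A → 1 ≤ L → 1 ≤ H → H ≤ S → 0 < ε → 0 < μ → μ ≤ 1 → 0 ≤ N →
        μ * N₀ - N ≤ C * (Real.sqrt (μ * S * A * H * N₀ * L) +
          Real.sqrt S * S * A * H ^ 2 * L ^ 3 * (Real.sqrt S + Real.sqrt H)) →
        ε / (2 * S) ≤ μ →
        c₀ * S ^ 3 * A * H ^ 2 * L ^ 3 / ε ≤ N₀ →
        μ * N₀ / 2 ≤ N := by
  refine ⟨32 * C ^ 2 + 16 * C, by positivity, ?_⟩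
  intro μ S A H L ε N₀ N hA hL hH hHS hε hμ hμ1 hN hreg hμl hN₀
  have hS : (1 : ℝ) ≤ S := hH.trans hHS
  have hSpos : (0 : ℝ) < S := by linarith
  have hHpos : (0 : ℝ) < H := by linarith
  have hApos : (0 : ℝ) < A := by linarith
  have hLpos : (0 : ℝ) < L := by linarith
  -- μ N₀ ≥ (16C²+8C) S²AH²L³
  have hN₀pos : 0 < N₀ := lt_of_lt_of_le (by positivity) hN₀
  have hkey : (16 * C ^ 2 + 8 * C) * (S ^ 2 * A * H ^ 2 * L ^ 3) ≤ μ * N₀ := by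
    have h2 : ε / (2 * S) * N₀ ≤ μ * N₀ :=
      mul_le_mul_of_nonneg_right hμl hN₀pos.le
    have h3 : ε / (2 * S) * ((32 * C ^ 2 + 16 * C) * S ^ 3 * A * H ^ 2 * L ^ 3 / ε)
        ≤ ε / (2 * S) * N₀ :=
      mul_le_mul_of_nonneg_left hN₀ (by positivity)
    have heq : ε / (2 * S) * ((32 * C ^ 2 + 16 * C) * S ^ 3 * A * H ^ 2 * L ^ 3 / ε)
        = (16 * C ^ 2 + 8 * C) * (S ^ 2 * A * H ^ 2 * L ^ 3) := by
      field_simp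
      ring
    linarith [heq ▸ h3]
  have hSAHL : S * A * H * L ≤ S ^ 2 * A * H ^ 2 * L ^ 3 := by
    have hone : (1 : ℝ) ≤ S * H * L ^ 2 := by
      have a1 : (1 : ℝ) ≤ S * H := by nlinarith
      have a2 : (1 : ℝ) ≤ L ^ 2 := by nlinarith
      calc (1 : ℝ) = 1 * 1 := by ring
        _ ≤ (S * H) * L ^ 2 := mul_le_mul a1 a2 zero_le_one (by positivity)
        _ = S * H * L ^ 2 := by ring
    calc S * A * H * L = 1 * (S * A * H * L) := by ring
      _ ≤ (S * H * L ^ 2) * (S * A * H * L) :=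
          mul_le_mul_of_nonneg_right hone (by positivity)
      _ = S ^ 2 * A * H ^ 2 * L ^ 3 := by ring
  have hP : 16 * C ^ 2 * (S * A * H * L) ≤ μ * N₀ := by
    have t1 : 16 * C ^ 2 * (S * A * H * L) ≤ 16 * C ^ 2 * (S ^ 2 * A * H ^ 2 * L ^ 3) :=
      mul_le_mul_of_nonneg_left hSAHL (by positivity)
    have t2 : 0 ≤ 8 * C * (S ^ 2 * A * H ^ 2 * L ^ 3) := by positivity
    nlinarith
  have hPpos : 0 < μ * N₀ := mul_pos hμ hN₀pos
  -- first term bound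
  have h1 : Real.sqrt (μ * S * A * H * N₀ * L) ≤ μ * N₀ / (4 * C) := by
    have hsq : μ * S * A * H * N₀ * L ≤ (μ * N₀ / (4 * C)) ^ 2 := by
      rw [div_pow, le_div_iff₀ (by positivity)]
      nlinarith [mul_le_mul_of_nonneg_right hP hPpos.le]
    calc Real.sqrt (μ * S * A * H * N₀ * L) ≤ Real.sqrt ((μ * N₀ / (4 * C)) ^ 2) :=
          Real.sqrt_le_sqrt hsq
      _ = μ * N₀ / (4 * C) := Real.sqrt_sq (by positivity)
  have hC1 : C * Real.sqrt (μ * S * A * H * N₀ * L) ≤ μ * N₀ / 4 := by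
    have := mul_le_mul_of_nonneg_left h1 hC.le
    have heq : C * (μ * N₀ / (4 * C)) = μ * N₀ / 4 := by
      field_simp
    linarith [heq ▸ this]
  -- second term bound
  have hsS : Real.sqrt S * Real.sqrt S = S := Real.mul_self_sqrt hSpos.le
  have hsH : Real.sqrt H ≤ Real.sqrt S := Real.sqrt_le_sqrt hHS
  have hsSpos : 0 ≤ Real.sqrt S := Real.sqrt_nonneg S
  have h2 : Real.sqrt S * S * A * H ^ 2 * L ^ 3 * (Real.sqrt S + Real.sqrt H)
      ≤ 2 * (S ^ 2 * A * H ^ 2 * L ^ 3) := by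
    have hb : Real.sqrt S * (Real.sqrt S + Real.sqrt H) ≤ 2 * S := by
      nlinarith [mul_le_mul_of_nonneg_left hsH hsSpos]
    have hpos : (0 : ℝ) ≤ S * A * H ^ 2 * L ^ 3 := by positivity
    calc Real.sqrt S * S * A * H ^ 2 * L ^ 3 * (Real.sqrt S + Real.sqrt H)
        = (S * A * H ^ 2 * L ^ 3) * (Real.sqrt S * (Real.sqrt S + Real.sqrt H)) := by ring
      _ ≤ (S * A * H ^ 2 * L ^ 3) * (2 * S) := mul_le_mul_of_nonneg_left hb hpos
      _ = 2 * (S ^ 2 * A * H ^ 2 * L ^ 3) := by ring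
  have hC2 : C * (Real.sqrt S * S * A * H ^ 2 * L ^ 3 * (Real.sqrt S + Real.sqrt H))
      ≤ μ * N₀ / 4 := by
    have h2' := mul_le_mul_of_nonneg_left h2 hC.le
    have h3 : C * (2 * (S ^ 2 * A * H ^ 2 * L ^ 3)) ≤ μ * N₀ / 4 := by
      have t3 : 0 ≤ 16 * C ^ 2 * (S ^ 2 * A * H ^ 2 * L ^ 3) := by positivity
      linarith [hkey, t3]
    linarith
  -- conclude
  have : μ * N₀ - N ≤ μ * N₀ / 4 + μ * N₀ / 4 := by
    calc μ * N₀ - N ≤ C * (Real.sqrt (μ * S * A * H * N₀ * L) +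
          Real.sqrt S * S * A * H ^ 2 * L ^ 3 * (Real.sqrt S + Real.sqrt H)) := hreg
      _ = C * Real.sqrt (μ * S * A * H * N₀ * L) +
          C * (Real.sqrt S * S * A * H ^ 2 * L ^ 3 * (Real.sqrt S + Real.sqrt H)) := by ring
      _ ≤ μ * N₀ / 4 + μ * N₀ / 4 := add_le_add hC1 hC2
  linarith
end
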